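/- Let λ be an uncountable cardinal. If there exists a ⊠*_λ-sequence (a square-with-built-in-diamond sequence ⟨(C_α, S_α) : α < λ⁺⟩ where guessing occurs on a stationary set S' ⊆ S avoiding all accumulation points), then there exists a ⊠_λ(S)-sequence, i.e., the principle ⊠'_λ(S) implies ⊠_λ(S) for every stationary S ⊆ λ⁺. -/

import Mathlib

open Ordinal Set

noncomputable section

/-- The set of accumulation points of `C` that belong to `C`. -/
def acc (C : Set Ordinal) : Set Ordinal :=
  {β | β ∈ C ∧ ∀ γ < β, ∃ δ ∈ C, γ < δ ∧ δ < β}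

/-- Non-accumulation points of `C`. -/
def nacc (C : Set Ordinal) : Set Ordinal := C \ acc C

/-- `X ∩ α` is cofinal in `α`. -/
def CofinalIn (X : Set Ordinal) (α : Ordinal) : Prop :=
  ∀ γ < α, ∃ δ ∈ X, γ < δ ∧ δ < α

/-- Accumulation points of `C` (not necessarily members of `C`). -/
def accPlus (C : Set Ordinal) : Set Ordinal :=
  {β | (∃ δ ∈ C, δ < β) ∧ ∀ γ < β, ∃ δ ∈ C, γ < δ ∧ δ < β}

def IsClosedSet (C : Set Ordinal) : Prop := accPlus C ⊆ C

/-- `C` is a club (closed and unbounded) subset of `α`. -/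
def IsClubIn (C : Set Ordinal) (α : Ordinal) : Prop :=
  C ⊆ Set.Iio α ∧ CofinalIn C α ∧ ∀ β < α, β ∈ accPlus C → β ∈ C

/-- The `i`-th element of the set of ordinals `C` (the inverse collapse of `C`). -/
def nth (C : Set Ordinal) (i : Ordinal) : Ordinal :=
  sInf (C \ Set.range (fun j : Set.Iio i => nth C j.1))
termination_by i
decreasing_by exact j.2

/-- The order type of a set of ordinals: the least `i` such that the first `i`
elements of `C` exhaust `C`. -/
def otp (C : Set Ordinal) : Ordinal :=
  sInf {i | C ⊆ Set.range (fun j : Set.Iio i => nth C j.1)}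

/-- The image of `E` under the order isomorphism (inverse collapse) `π_C : otp(C) → C`. -/
def collapseImage (C E : Set Ordinal) : Set Ordinal :=
  {β | β ∈ C ∧ otp (C ∩ Set.Iio β) ∈ E}

def IsStationaryIn (S : Set Ordinal) (α : Ordinal) : Prop :=
  ∀ D, IsClubIn D α → (S ∩ D).Nonempty

/-- A `□_λ`-sequence. -/
def IsSquareSeq (lam : Cardinal) (C : Ordinal → Set Ordinal) : Prop :=
  ∀ α < (Order.succ lam).ord, Order.IsSuccLimit α →
    IsClubIn (C α) α ∧ otp (C α) ≤ lam.ord ∧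
    ∀ β ∈ acc (C α), C β = C α ∩ Set.Iio β

/-- An Ostaszewski square (`⊠_λ`) sequence. -/
def IsOstSeq (lam : Cardinal) (C : Ordinal → Set Ordinal) : Prop :=
  IsSquareSeq lam C ∧
  ∀ A : Ordinal → Set Ordinal,
    (∀ i < lam.ord, CofinalIn (A i) (Order.succ lam).ord) →
    ∀ θ < lam.ord, Order.IsSuccLimit θ →
    ∀ D, IsClubIn D (Order.succ lam).ord →
    ∃ α < (Order.succ lam).ord, otp (C α) = θ ∧
      ∀ i < θ, nth (C α) (i + 1) ∈ A i ∧
        ∃ β ∈ D, nth (C α) i < β ∧ β < nth (C α) (i + 1)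

/-- The principle `⊠'_λ(S)`. -/
def BoxPrimeSeq (lam : Cardinal) (S : Set Ordinal) : Prop :=
  ∃ C Sd : Ordinal → Set Ordinal,
    (∀ α < (Order.succ lam).ord, Order.IsSuccLimit α →
      IsClubIn (C α) α ∧ otp (C α) ≤ lam.ord) ∧
    (∀ α < (Order.succ lam).ord, Order.IsSuccLimit α → ∀ β ∈ acc (C α),
      C β = C α ∩ Set.Iio β ∧ Sd β = Sd α ∩ Set.Iio β) ∧
    (∀ D, IsClubIn D (Order.succ lam).ord → ∀ A : Set Ordinal,
      ∃ α ∈ S, C α ⊆ D ∧ Sd α = A ∩ Set.Iio α ∧ CofinalIn (acc (C α)) α)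

/-- The principle `⊠_λ(S)`: guesses take place on a fixed `S' ⊆ S` avoiding all
accumulation points. -/
def BoxDiamondSeq (lam : Cardinal) (S : Set Ordinal) : Prop :=
  ∃ C Sd : Ordinal → Set Ordinal, ∃ S' ⊆ S,
    (∀ α < (Order.succ lam).ord, Order.IsSuccLimit α →
      IsClubIn (C α) α ∧ otp (C α) ≤ lam.ord) ∧
    (∀ α < (Order.succ lam).ord, Order.IsSuccLimit α → ∀ β ∈ acc (C α),
      C β = C α ∩ Set.Iio β ∧ Sd β = Sd α ∩ Set.Iio β) ∧
    (∀ D, IsClubIn D (Order.succ lam).ord → ∀ A : Set Ordinal,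
      ∃ α ∈ S', C α ⊆ D ∧ Sd α = A ∩ Set.Iio α ∧ CofinalIn (acc (C α)) α) ∧
    (∀ α < (Order.succ lam).ord, S' ∩ acc (C α) = ∅)

/- ============ Auxiliary material for stmt5 ============ -/

attribute [local instance] Classical.propDecidable

namespace Stmt5Aux

universe u

/-- The range of the first `i` values of `nth C`. -/
def rng (C : Set Ordinal.{u}) (i : Ordinal.{u}) : Set Ordinal.{u} :=
  Set.range (fun j : Set.Iio i => nth.{u, u} C j.1)

lemma nth_def' (C : Set Ordinal.{u}) (i : Ordinal.{u}) :
    nth.{u, u} C i = sInf (C \ rng C i) := by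
  rw [nth]; rfl

lemma rng_mono (C : Set Ordinal.{u}) {i j : Ordinal} (h : i ≤ j) : rng C i ⊆ rng C j := by
  rintro x ⟨⟨a, ha⟩, rfl⟩
  exact ⟨⟨a, lt_of_lt_of_le ha h⟩, rfl⟩

lemma diff_rng_anti (C : Set Ordinal.{u}) {i j : Ordinal} (h : i ≤ j) :
    C \ rng C j ⊆ C \ rng C i :=
  fun x hx => ⟨hx.1, fun hm => hx.2 (rng_mono C h hm)⟩

lemma mem_nth {C : Set Ordinal.{u}} {i : Ordinal.{u}} (h : (C \ rng C i).Nonempty) :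
    nth C i ∈ C \ rng C i := by
  rw [nth_def']; exact csInf_mem h

lemma nth_lt_nth {C : Set Ordinal.{u}} {j i : Ordinal.{u}} (hji : j < i)
    (h : (C \ rng C i).Nonempty) : nth C j < nth C i := by
  have hi := mem_nth h
  have hmem : nth C i ∈ C \ rng C j := diff_rng_anti C hji.le hi
  have hle : nth C j ≤ nth C i := by
    rw [nth_def']; exact csInf_le (OrderBot.bddBelow _) hmem
  rcases hle.lt_or_eq with h' | h'
  · exact h'
  · exact absurd (⟨⟨j, hji⟩, h'⟩ : nth C i ∈ rng C i) hi.2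

lemma le_nth {C : Set Ordinal.{u}} : ∀ i : Ordinal.{u}, (C \ rng C i).Nonempty → i ≤ nth C i := by
  intro i
  induction i using Ordinal.induction with
  | _ i IH =>
    intro h
    by_contra h'
    push_neg at h'
    have h2 := IH (nth C i) h' (h.mono (diff_rng_anti C h'.le))
    exact absurd (nth_lt_nth h' h) (not_lt.mpr h2)

lemma subset_rng {C : Set Ordinal.{u}} {b : Ordinal.{u}} (hC : C ⊆ Set.Iio b) : C ⊆ rng C b := by
  by_contra h
  rcases Set.not_subset.mp h with ⟨x, hxC, hxR⟩
  have hne : (C \ rng C b).Nonempty := ⟨x, hxC, hxR⟩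
  exact absurd (hC (mem_nth hne).1) (not_lt.mpr (le_nth b hne))

lemma otp_eq (C : Set Ordinal.{u}) : otp.{u, u} C = sInf {i | C ⊆ rng C i} := rfl

lemma otp_mono {X Y : Set Ordinal.{u}} {b : Ordinal.{u}} (hXY : X ⊆ Y) (hY : Y ⊆ Set.Iio b) :
    otp.{u, u} X ≤ otp.{u, u} Y := by
  have hYex : Y ⊆ rng Y (otp.{u, u} Y) := by
    have hne : ({i | Y ⊆ rng Y i}).Nonempty := ⟨b, subset_rng hY⟩
    have := csInf_mem hne
    rw [otp_eq]
    exact this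
  have key : ∀ i : Ordinal.{u}, (X \ rng X i).Nonempty →
      (Y \ rng Y i).Nonempty ∧ nth Y i ≤ nth X i := by
    intro i
    induction i using Ordinal.induction with
    | _ i IH =>
      intro h
      have hx := mem_nth h
      have hmem : nth X i ∈ Y \ rng Y i := by
        refine ⟨hXY hx.1, ?_⟩
        rintro ⟨⟨j, hji⟩, hj⟩
        have h2 := (IH j hji (h.mono (diff_rng_anti X hji.le))).2
        have h3 : nth X j < nth X i := nth_lt_nth hji h
        have h4 : nth X i ≤ nth X j := hj ▸ h2
        exact absurd h3 (not_lt.mpr h4)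
      refine ⟨⟨_, hmem⟩, ?_⟩
      rw [nth_def']
      exact csInf_le (OrderBot.bddBelow _) hmem
  by_contra hlt
  push_neg at hlt
  have hXs : ¬ X ⊆ rng X (otp.{u, u} Y) := by
    intro hs
    have : otp X ≤ otp Y := by
      rw [otp_eq]
      exact csInf_le (OrderBot.bddBelow _) (hs : otp.{u, u} Y ∈ {i | X ⊆ rng X i})
    exact absurd this (not_le.mpr hlt)
  rcases Set.not_subset.mp hXs with ⟨x, hxX, hxR⟩
  rcases (key (otp.{u, u} Y) ⟨x, hxX, hxR⟩).1 with ⟨y, hyY, hyR⟩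
  exact hyR (hYex hyY)

lemma acc_mono {X Y : Set Ordinal} (h : X ⊆ Y) : acc X ⊆ acc Y := by
  rintro x ⟨hx, hcf⟩
  exact ⟨h hx, fun γ hγ => by
    obtain ⟨δ, hδ, h1, h2⟩ := hcf γ hγ
    exact ⟨δ, h hδ, h1, h2⟩⟩

lemma accPlus_mono {X Y : Set Ordinal} (h : X ⊆ Y) : accPlus X ⊆ accPlus Y := by
  rintro x ⟨⟨δ, hδ, hlt⟩, hcf⟩
  refine ⟨⟨δ, h hδ, hlt⟩, fun γ hγ => ?_⟩
  obtain ⟨e, he, h1, h2⟩ := hcf γ hγ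
  exact ⟨e, h he, h1, h2⟩

lemma acc_inter_Iio {Y : Set Ordinal} {b : Ordinal} :
    acc (Y ∩ Set.Iio b) = acc Y ∩ Set.Iio b := by
  ext x
  constructor
  · rintro ⟨⟨hxY, hxb⟩, hcf⟩
    refine ⟨⟨hxY, fun γ hγ => ?_⟩, hxb⟩
    obtain ⟨δ, hδ, h1, h2⟩ := hcf γ hγ
    exact ⟨δ, hδ.1, h1, h2⟩
  · rintro ⟨⟨hxY, hcf⟩, hxb⟩
    refine ⟨⟨hxY, hxb⟩, fun γ hγ => ?_⟩
    obtain ⟨δ, hδ, h1, h2⟩ := hcf γ hγ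
    exact ⟨δ, ⟨hδ, h2.trans hxb⟩, h1, h2⟩

/-- A "good" point: a member of `S` in which the accumulation points of its club
are cofinal. -/
def GoodPt (S : Set Ordinal) (C : Ordinal → Set Ordinal) (α : Ordinal) : Prop :=
  α ∈ S ∧ CofinalIn (acc (C α)) α

/-- The guessing set: good points below which no good point occurs on the club's
accumulation points. -/
def Sp (S : Set Ordinal) (C : Ordinal → Set Ordinal) : Set Ordinal :=
  {α | GoodPt S C α ∧ ∀ α' ∈ acc (C α), α' < α → ¬ GoodPt S C α'}

/-- The pruning point. -/
def gam (S : Set Ordinal) (C : Ordinal → Set Ordinal) (β : Ordinal) : Ordinal :=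
  sSup (Sp S C ∩ acc (C β))

/-- The pruned club sequence. -/
def C2 (S : Set Ordinal) (C : Ordinal → Set Ordinal) (κ : Ordinal) (β : Ordinal) :
    Set Ordinal :=
  if β < κ ∧ Order.IsSuccLimit β then C β \ Set.Iic (gam S C β) else ∅

/-- The adjusted guessing-sets sequence. -/
def Sd2 (Sd : Ordinal → Set Ordinal) (κ : Ordinal) (β : Ordinal) : Set Ordinal :=
  if β < κ ∧ Order.IsSuccLimit β then Sd β else ∅

end Stmt5Aux

open Stmt5Aux in
theorem stmt5 (lam : Cardinal) (hunc : Cardinal.aleph0 < lam) :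
    ∀ S ⊆ Set.Iio (Order.succ lam).ord, IsStationaryIn S (Order.succ lam).ord →
      BoxPrimeSeq lam S → BoxDiamondSeq lam S := by
  classical
  intro S hSsub _hstat hprime
  obtain ⟨C, Sd, h1, h2, h3⟩ := hprime
  set κ := (Order.succ lam).ord with hκdef
  have hCsub : ∀ β, β < κ → Order.IsSuccLimit β → C β ⊆ Set.Iio β := fun β hβ hl => (h1 β hβ hl).1.1
  -- uniqueness of points of `Sp ∩ acc (C β)`
  have haux : ∀ β, β < κ → Order.IsSuccLimit β → ∀ a ∈ Sp S C ∩ acc (C β),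
      ∀ b ∈ Sp S C ∩ acc (C β), a < b → False := by
    intro β hβ hl a ha b hb hab
    have hCb : C b = C β ∩ Set.Iio b := (h2 β hβ hl b hb.2).1
    have hab' : a ∈ acc (C b) := by
      rw [hCb, acc_inter_Iio]
      exact ⟨ha.2, hab⟩
    exact hb.1.2 a hab' hab ha.1.1
  have huniq : ∀ β, β < κ → Order.IsSuccLimit β → ∀ a ∈ Sp S C ∩ acc (C β),
      ∀ b ∈ Sp S C ∩ acc (C β), a = b := by
    intro β hβ hl a ha b hb
    rcases lt_trichotomy a b with h | h | h
    · exact (haux β hβ hl a ha b hb h).elim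
    · exact h
    · exact (haux β hβ hl b hb a ha h).elim
  -- the pruning point is below β and bounds the intersection
  have hgam : ∀ β, β < κ → Order.IsSuccLimit β →
      gam S C β < β ∧ ∀ x ∈ Sp S C ∩ acc (C β), x ≤ gam S C β := by
    intro β hβ hl
    rcases Set.eq_empty_or_nonempty (Sp S C ∩ acc (C β)) with he | ⟨a, ha⟩
    · constructor
      · have : gam S C β = 0 := by
          rw [gam, he, csSup_empty]
          rfl
        rw [this]
        exact hl.pos
      · intro x hx
        rw [he] at hx
        exact absurd hx (Set.notMem_empty x)
    · have hsing : Sp S C ∩ acc (C β) = {a} := by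
        apply Set.eq_singleton_iff_unique_mem.mpr
        exact ⟨ha, fun x hx => huniq β hβ hl x hx a ha⟩
      have hga : gam S C β = a := by rw [gam, hsing, csSup_singleton]
      constructor
      · rw [hga]
        exact hCsub β hβ hl ha.2.1
      · intro x hx
        rw [hsing] at hx
        rw [hga]
        exact le_of_eq hx
  -- coherence of the pruning point
  have hgameq : ∀ α, α < κ → Order.IsSuccLimit α → ∀ b ∈ acc (C α), gam S C α < b →
      gam S C b = gam S C α := by
    intro α hα hl b hb hgb
    have hCb : C b = C α ∩ Set.Iio b := (h2 α hα hl b hb).1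
    have hset : Sp S C ∩ acc (C b) = Sp S C ∩ acc (C α) := by
      rw [hCb, acc_inter_Iio, ← Set.inter_assoc]
      apply Set.inter_eq_left.mpr
      intro x hx
      exact Set.mem_Iio.mpr (lt_of_le_of_lt ((hgam α hα hl).2 x hx) hgb)
    rw [gam, gam, hset]
  -- basic facts about points of acc (C2 α)
  have hacc2 : ∀ α, α < κ → Order.IsSuccLimit α → ∀ b ∈ acc (C2 S C κ α),
      b ∈ acc (C α) ∧ gam S C α < b ∧ b < κ ∧ Order.IsSuccLimit b := by
    intro α hα hl b hb
    have hif : C2 S C κ α = C α \ Set.Iic (gam S C α) := if_pos ⟨hα, hl⟩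
    rw [hif] at hb
    have hbacc : b ∈ acc (C α) := acc_mono Set.diff_subset hb
    have hbgt : gam S C α < b := not_le.mp hb.1.2
    have hbκ : b < κ := lt_trans (hCsub α hα hl hb.1.1) hα
    have hblim : Order.IsSuccLimit b := by
      refine Ordinal.isSuccLimit_iff.mpr ⟨?_, Order.isSuccPrelimit_of_succ_lt ?_⟩
      · exact pos_iff_ne_zero.mp (lt_of_le_of_lt zero_le hbgt)
      · intro c hc
        obtain ⟨δ, _, h1', h2'⟩ := hb.2 c hc
        exact lt_of_le_of_lt (Order.succ_le_of_lt h1') h2'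
    exact ⟨hbacc, hbgt, hbκ, hblim⟩
  refine ⟨C2 S C κ, Sd2 Sd κ, Sp S C, fun α hα => hα.1.1, ?_, ?_, ?_, ?_⟩
  · -- (1) clubs of small order type
    intro α hα hl
    have hif : C2 S C κ α = C α \ Set.Iic (gam S C α) := if_pos ⟨hα, hl⟩
    have hclub := h1 α hα hl
    have hg := (hgam α hα hl).1
    rw [hif]
    constructor
    · refine ⟨fun x hx => hclub.1.1 hx.1, ?_, ?_⟩
      · -- cofinal
        intro g hg'
        obtain ⟨δ, hδC, hδ1, hδ2⟩ := hclub.1.2.1 (max g (gam S C α)) (max_lt hg' hg)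
        exact ⟨δ, ⟨hδC, not_le.mpr (lt_of_le_of_lt (le_max_right _ _) hδ1)⟩,
          lt_of_le_of_lt (le_max_left _ _) hδ1, hδ2⟩
      · -- closed
        intro b hb hbacc
        have hbC : b ∈ C α := hclub.1.2.2 b hb (accPlus_mono Set.diff_subset hbacc)
        obtain ⟨δ, hδ, hδb⟩ := hbacc.1
        exact ⟨hbC, not_le.mpr (lt_trans (not_le.mp hδ.2) hδb)⟩
    · exact le_trans (otp_mono Set.diff_subset hclub.1.1) hclub.2
  · -- (2) coherence
    intro α hα hl b hb
    obtain ⟨hbacc, hbgt, hbκ, hblim⟩ := hacc2 α hα hl b hb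
    have hprime' := h2 α hα hl b hbacc
    have hgb : gam S C b = gam S C α := hgameq α hα hl b hbacc hbgt
    constructor
    · rw [show C2 S C κ b = C b \ Set.Iic (gam S C b) from if_pos ⟨hbκ, hblim⟩,
        show C2 S C κ α = C α \ Set.Iic (gam S C α) from if_pos ⟨hα, hl⟩,
        hgb, hprime'.1]
      ext x
      simp only [Set.mem_diff, Set.mem_inter_iff, Set.mem_Iio, Set.mem_Iic]
      tauto
    · rw [show Sd2 Sd κ b = Sd b from if_pos ⟨hbκ, hblim⟩,
        show Sd2 Sd κ α = Sd α from if_pos ⟨hα, hl⟩]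
      exact hprime'.2
  · -- (3) guessing
    intro D hD A
    set G : Set Ordinal :=
      {a | a ∈ S ∧ C a ⊆ D ∧ Sd a = A ∩ Set.Iio a ∧ CofinalIn (acc (C a)) a} with hGdef
    have hGne : G.Nonempty := by
      obtain ⟨α, hαS, hα1, hα2, hα3⟩ := h3 D hD A
      exact ⟨α, hαS, hα1, hα2, hα3⟩
    set α₀ := sInf G with hα₀def
    have hα₀G : α₀ ∈ G := csInf_mem hGne
    have hα₀κ : α₀ < κ := hSsub hα₀G.1
    have hmin : ∀ x < α₀, x ∉ G := fun x hx hxG =>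
      absurd (csInf_le (OrderBot.bddBelow _) hxG) (not_le.mpr hx)
    have hnotsucc : ∀ c, α₀ ≠ Order.succ c := by
      intro c hc
      obtain ⟨δ, _, h1', h2'⟩ := hα₀G.2.2.2 c (by rw [hc]; exact Order.lt_succ c)
      rw [hc] at h2'
      exact absurd h1' (not_lt.mpr (Order.lt_succ_iff.mp h2'))
    have hα₀Sp : α₀ ∈ Sp S C := by
      refine ⟨⟨hα₀G.1, hα₀G.2.2.2⟩, ?_⟩
      intro a ha halt hGood
      rcases Ordinal.zero_or_succ_or_isSuccLimit α₀ with h0 | ⟨c, hc⟩ | hlim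
      · rw [h0] at halt
        exact absurd halt (not_lt_of_ge (zero_le (a := a)))
      · exact hnotsucc c hc.symm
      · have hco := h2 α₀ hα₀κ hlim a ha
        refine hmin a halt ⟨hGood.1, ?_, ?_, hGood.2⟩
        · rw [hco.1]
          exact fun x hx => hα₀G.2.1 hx.1
        · rw [hco.2, hα₀G.2.2.1]
          ext x
          simp only [Set.mem_inter_iff, Set.mem_Iio]
          constructor
          · rintro ⟨⟨hxA, _⟩, hxa⟩
            exact ⟨hxA, hxa⟩
          · rintro ⟨hxA, hxa⟩
            exact ⟨⟨hxA, hxa.trans halt⟩, hxa⟩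
    have hkey : C2 S C κ α₀ ⊆ D ∧ Sd2 Sd κ α₀ = A ∩ Set.Iio α₀ ∧
        CofinalIn (acc (C2 S C κ α₀)) α₀ := by
      rcases Ordinal.zero_or_succ_or_isSuccLimit α₀ with h0 | ⟨c, hc⟩ | hlim
      · have hC20 : C2 S C κ α₀ = ∅ := by
          rw [C2, if_neg]
          rintro ⟨-, hl⟩
          exact hl.ne_zero h0
        have hSd20 : Sd2 Sd κ α₀ = ∅ := by
          rw [Sd2, if_neg]
          rintro ⟨-, hl⟩
          exact hl.ne_zero h0
        refine ⟨by rw [hC20]; exact Set.empty_subset D, ?_, ?_⟩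
        · rw [hSd20, h0]
          ext x
          simp
        · intro g hg
          rw [h0] at hg
          exact absurd hg (not_lt_of_ge (zero_le (a := g)))
      · exact (hnotsucc c hc.symm).elim
      · have hif : C2 S C κ α₀ = C α₀ \ Set.Iic (gam S C α₀) := if_pos ⟨hα₀κ, hlim⟩
        have hg0 := (hgam α₀ hα₀κ hlim).1
        refine ⟨?_, ?_, ?_⟩
        · rw [hif]
          exact fun x hx => hα₀G.2.1 hx.1
        · rw [show Sd2 Sd κ α₀ = Sd α₀ from if_pos ⟨hα₀κ, hlim⟩]
          exact hα₀G.2.2.1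
        · intro g hg
          obtain ⟨δ, hδacc, hδ1, hδ2⟩ := hα₀G.2.2.2 (max g (gam S C α₀)) (max_lt hg hg0)
          have hδgt : gam S C α₀ < δ := lt_of_le_of_lt (le_max_right _ _) hδ1
          refine ⟨δ, ?_, lt_of_le_of_lt (le_max_left _ _) hδ1, hδ2⟩
          rw [hif]
          refine ⟨⟨hδacc.1, not_le.mpr hδgt⟩, ?_⟩
          intro c hc
          obtain ⟨e, heC, he1, he2⟩ := hδacc.2 (max c (gam S C α₀)) (max_lt hc hδgt)
          exact ⟨e, ⟨heC, not_le.mpr (lt_of_le_of_lt (le_max_right _ _) he1)⟩,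
            lt_of_le_of_lt (le_max_left _ _) he1, he2⟩
    exact ⟨α₀, hα₀Sp, hkey.1, hkey.2.1, hkey.2.2⟩
  · -- (4) avoidance of accumulation points
    intro α hα
    apply Set.eq_empty_iff_forall_notMem.mpr
    rintro x ⟨hxSp, hxacc⟩
    by_cases hc : α < κ ∧ Order.IsSuccLimit α
    · obtain ⟨hx1, hx2, -, -⟩ := hacc2 α hc.1 hc.2 x hxacc
      exact absurd ((hgam α hc.1 hc.2).2 x ⟨hxSp, hx1⟩) (not_le.mpr hx2)
    · rw [show C2 S C κ α = ∅ from if_neg hc] at hxacc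
      exact hxacc.1

end
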